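/- Let d ≥ 1. For every pair of permutations ρ, σ ∈ S_d there exists exactly one strictly decreasing walk from ρ to σ in the Hurwitz–Cayley graph, i.e., exactly one sequence of transpositions ((i_1 j_1), …, (i_r j_r)) with i_k < j_k and j_1 > j_2 > ⋯ > j_r such that ρ·(i_1 j_1)⋯(i_r j_r) = σ; moreover its length r equals d − ℓ(ρ⁻¹σ), so this walk is a geodesic. -/

import Mathlib

noncomputable section

/-- The number of cycles of a permutation of `{1,…,d}`, counting fixed points as 1-cycles. -/
def ell {d : ℕ} (π : Equiv.Perm (Fin d)) : ℕ :=
  π.cycleType.card + (d - π.support.card)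

/-- The transposition associated with a pair of points. -/
def toSwap {d : ℕ} (p : Fin d × Fin d) : Equiv.Perm (Fin d) :=
  Equiv.swap p.1 p.2

open Equiv Equiv.Perm Finset

lemma prod_fix_of_gt {d : ℕ} (l : List (Fin d × Fin d)) (x : Fin d)
    (h : ∀ p ∈ l, p.1 < p.2) (h2 : ∀ p ∈ l, p.2 < x) :
    (l.map toSwap).prod x = x := by
  induction l with
  | nil => simp
  | cons p l ih =>
    simp only [List.map_cons, List.prod_cons, Equiv.Perm.mul_apply]
    rw [ih (fun q hq => h q (List.mem_cons_of_mem _ hq))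
        (fun q hq => h2 q (List.mem_cons_of_mem _ hq))]
    have hp2 : p.2 < x := h2 p (List.mem_cons_self)
    have hp1 : p.1 < x := lt_trans (h p (List.mem_cons_self)) hp2
    exact Equiv.swap_apply_of_ne_of_ne hp1.ne' hp2.ne'

lemma head_spec {d : ℕ} (p : Fin d × Fin d) (l : List (Fin d × Fin d))
    (h : ∀ q ∈ p :: l, q.1 < q.2)
    (hs : ((p :: l).map Prod.snd).Pairwise (· > ·)) :
    ((p :: l).map toSwap).prod p.2 = p.1 ∧
      ∀ x, p.2 < x → ((p :: l).map toSwap).prod x = x := by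
  have hs0 : List.Pairwise (· > ·) (p.2 :: l.map Prod.snd) := by
    rw [List.map_cons] at hs; exact hs
  have hs' := List.pairwise_cons.mp hs0
  have hlt : ∀ q ∈ l, q.2 < p.2 := by
    intro q hq
    exact hs'.1 q.2 (List.mem_map_of_mem (f := Prod.snd) hq)
  constructor
  · simp only [List.map_cons, List.prod_cons, Equiv.Perm.mul_apply]
    rw [prod_fix_of_gt l p.2 (fun q hq => h q (List.mem_cons_of_mem _ hq)) hlt]
    exact Equiv.swap_apply_right _ _
  · intro x hx
    simp only [List.map_cons, List.prod_cons, Equiv.Perm.mul_apply]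
    rw [prod_fix_of_gt l x (fun q hq => h q (List.mem_cons_of_mem _ hq))
        (fun q hq => lt_trans (hlt q hq) hx)]
    exact Equiv.swap_apply_of_ne_of_ne
      (lt_trans (h p (List.mem_cons_self)) hx).ne' hx.ne'

lemma ell_le {d : ℕ} (π : Equiv.Perm (Fin d)) : ell π ≤ d := by
  have h2 := π.sum_cycleType
  have h3 : π.support.card ≤ d := by simpa using Finset.card_le_univ π.support
  have h1 : Multiset.card π.cycleType ≤ π.cycleType.sum := by
    calc Multiset.card π.cycleType = Multiset.card π.cycleType • 1 := by simp
    _ ≤ π.cycleType.sum := Multiset.card_nsmul_le_sum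
        (fun x hx => le_trans one_le_two (Equiv.Perm.two_le_of_mem_cycleType hx))
  unfold ell
  omega

lemma ell_one {d : ℕ} : ell (1 : Equiv.Perm (Fin d)) = d := by
  simp [ell]

lemma ell_swap_mul {d : ℕ} (π : Equiv.Perm (Fin d)) (j : Fin d) (hj : π j ≠ j) :
    ell (Equiv.swap j (π j) * π) = ell π + 1 := by
  classical
  set c := π.cycleOf j with hc
  set g := π * c⁻¹ with hg
  have hgc_fix : ∀ x, π.SameCycle j x → g x = x := by
    intro x hx
    have hx' : π.SameCycle j (π⁻¹ x) := hx.trans ⟨-1, by simp⟩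
    have hcx : c (π⁻¹ x) = x := by
      rw [hc, Equiv.Perm.cycleOf_apply, if_pos hx', (show π (π⁻¹ x) = x from π.apply_symm_apply x)]
    have hcinv : c⁻¹ x = π⁻¹ x := Equiv.Perm.inv_eq_iff_eq.mpr hcx.symm
    rw [hg, Equiv.Perm.mul_apply, hcinv, (show π (π⁻¹ x) = x from π.apply_symm_apply x)]
  have hdisj : g.Disjoint c := by
    intro x
    by_cases hx : π.SameCycle j x
    · exact Or.inl (hgc_fix x hx)
    · right; rw [hc, Equiv.Perm.cycleOf_apply, if_neg hx]
  have hπ : π = g * c := by rw [hg, inv_mul_cancel_right]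
  have hcyc : c.IsCycle := π.isCycle_cycleOf hj
  have hcj : c j = π j := π.cycleOf_apply_self j
  have hcpj : c (π j) = π (π j) := by
    rw [hc, Equiv.Perm.cycleOf_apply, if_pos ⟨1, by simp⟩]
  by_cases hA : π (π j) ≠ j
  · have hccj : c (c j) ≠ j := by rw [hcj, hcpj]; exact hA
    have hc' : (Equiv.swap j (c j) * c).IsCycle :=
      hcyc.swap_mul (by rw [hcj]; exact hj) hccj
    have hc'supp : (Equiv.swap j (c j) * c).support = c.support \ {j} :=
      Equiv.Perm.support_swap_mul_eq c j hccj
    have hsupp' : (Equiv.swap j (π j) * π).support = π.support \ {j} :=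
      Equiv.Perm.support_swap_mul_eq π j hA
    have hswapg : (Equiv.swap j (π j)).Disjoint g := by
      intro x
      by_cases hxj : x = j
      · subst hxj; exact Or.inr (hgc_fix _ (Equiv.Perm.SameCycle.refl _ _))
      by_cases hxpj : x = π j
      · subst hxpj; exact Or.inr (hgc_fix _ ⟨1, by simp⟩)
      · exact Or.inl (Equiv.swap_apply_of_ne_of_ne hxj hxpj)
    have hkey : Equiv.swap j (π j) * π = g * (Equiv.swap j (c j) * c) := by
      rw [hcj]
      calc Equiv.swap j (π j) * π
          = Equiv.swap j (π j) * (g * c) := by rw [← hπ]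
        _ = g * (Equiv.swap j (π j) * c) := by
            rw [← mul_assoc, hswapg.commute.eq, mul_assoc]
    have hdisj' : g.Disjoint (Equiv.swap j (c j) * c) := by
      rw [Equiv.Perm.disjoint_iff_disjoint_support] at hdisj ⊢
      rw [hc'supp]
      exact hdisj.mono_right Finset.sdiff_subset
    have hct : π.cycleType = g.cycleType + c.cycleType := by
      rw [hπ]; exact hdisj.cycleType_mul
    have hct' : (Equiv.swap j (π j) * π).cycleType
        = g.cycleType + (Equiv.swap j (c j) * c).cycleType := by
      rw [hkey]; exact hdisj'.cycleType_mul
    have hcard1 : Multiset.card c.cycleType = 1 := by rw [hcyc.cycleType]; simp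
    have hcard2 : Multiset.card (Equiv.swap j (c j) * c).cycleType = 1 := by
      rw [hc'.cycleType]; simp
    have hjmem : j ∈ π.support := Equiv.Perm.mem_support.mpr hj
    have hd1 : π.support.card ≤ d := by simpa using Finset.card_le_univ π.support
    have hco : 1 ≤ π.support.card := Finset.card_pos.mpr ⟨j, hjmem⟩
    have hsd : (π.support \ {j}).card = π.support.card - 1 := by
      rw [Finset.card_sdiff_of_subset (Finset.singleton_subset_iff.mpr hjmem),
        Finset.card_singleton]
    unfold ell
    rw [hsupp', hsd, hct, hct', Multiset.card_add, Multiset.card_add, hcard1, hcard2]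
    omega
  · push_neg at hA
    have aux : ∀ n : ℕ, (π ^ n) j = j ∨ (π ^ n) j = π j := by
      intro n
      induction n with
      | zero => left; rfl
      | succ n ihn =>
        rw [pow_succ', Equiv.Perm.mul_apply]
        rcases ihn with h | h
        · right; rw [h]
        · left; rw [h]; exact hA
    have horb : ∀ x, π.SameCycle j x → x = j ∨ x = π j := by
      intro x hx
      obtain ⟨n, -, hn⟩ := hx.exists_pow_eq'
      rcases aux n with h | h
      · left; rw [← hn, h]
      · right; rw [← hn, h]
    have hcswap : c = Equiv.swap j (π j) := by
      apply Equiv.ext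
      intro x
      rw [hc, Equiv.Perm.cycleOf_apply]
      by_cases hx : π.SameCycle j x
      · rw [if_pos hx]
        rcases horb x hx with rfl | rfl
        · rw [Equiv.swap_apply_left]
        · rw [hA, Equiv.swap_apply_right]
      · rw [if_neg hx]
        have h1 : x ≠ j := by rintro rfl; exact hx (Equiv.Perm.SameCycle.refl _ _)
        have h2 : x ≠ π j := by rintro rfl; exact hx ⟨1, by simp⟩
        exact (Equiv.swap_apply_of_ne_of_ne h1 h2).symm
    have hgeq : Equiv.swap j (π j) * π = g := by
      have h1 : c * (g * c) = g := by
        rw [hdisj.commute.eq, ← mul_assoc, hcswap, Equiv.swap_mul_self, one_mul]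
      calc Equiv.swap j (π j) * π = c * (g * c) := by rw [← hπ, hcswap]
      _ = g := h1
    have hsupp : π.support = g.support ∪ c.support := by
      rw [hπ]; exact hdisj.support_mul
    have hcardc : c.support.card = 2 := by
      rw [hcswap, Equiv.Perm.support_swap (Ne.symm hj)]
      exact Finset.card_pair (Ne.symm hj)
    have hdisjsupp := Equiv.Perm.disjoint_iff_disjoint_support.mp hdisj
    have hcardu : π.support.card = g.support.card + c.support.card := by
      rw [hsupp, Finset.card_union_of_disjoint hdisjsupp]
    have hct : π.cycleType = g.cycleType + c.cycleType := by
      rw [hπ]; exact hdisj.cycleType_mul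
    have hcard1 : Multiset.card c.cycleType = 1 := by rw [hcyc.cycleType]; simp
    have hd1 : π.support.card ≤ d := by simpa using Finset.card_le_univ π.support
    rw [hgeq]
    unfold ell
    rw [hct, Multiset.card_add, hcard1]
    omega

lemma main_lemma (d : ℕ) : ∀ n : ℕ, ∀ π : Equiv.Perm (Fin d),
    (∀ x : Fin d, π x ≠ x → (x : ℕ) < n) →
    ∃ l : List (Fin d × Fin d),
      ((∀ p ∈ l, p.1 < p.2) ∧ (l.map Prod.snd).Pairwise (· > ·) ∧
        (l.map toSwap).prod = π) ∧
      l.length = d - ell π ∧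
      ∀ l' : List (Fin d × Fin d),
        ((∀ p ∈ l', p.1 < p.2) ∧ (l'.map Prod.snd).Pairwise (· > ·) ∧
          (l'.map toSwap).prod = π) → l' = l := by
  intro n
  induction n using Nat.strong_induction_on with
  | _ n ih =>
  intro π hπ
  by_cases h1 : π = 1
  · subst h1
    refine ⟨[], ⟨by simp, by simp, by simp⟩, by simp [ell_one], ?_⟩
    rintro l' ⟨hp, hs, hprod⟩
    cases l' with
    | nil => rfl
    | cons p rest =>
      exfalso
      have hh := (head_spec p rest hp hs).1
      rw [hprod] at hh
      simp only [Equiv.Perm.one_apply] at hh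
      exact absurd hh (ne_of_gt (hp p (List.mem_cons_self)))
  · have hne : π.support.Nonempty := Finset.nonempty_iff_ne_empty.mpr
      (fun h => h1 (Equiv.Perm.support_eq_empty_iff.mp h))
    obtain ⟨j, hjmem, hjmax⟩ : ∃ j ∈ π.support, ∀ b ∈ π.support, b ≤ j :=
      ⟨π.support.max' hne, π.support.max'_mem hne, fun b hb => π.support.le_max' b hb⟩
    have hjm : π j ≠ j := Equiv.Perm.mem_support.mp hjmem
    have hjn : (j : ℕ) < n := hπ j hjm
    have hij : π j < j :=
      lt_of_le_of_ne (hjmax _ (Equiv.Perm.apply_mem_support.mpr hjmem)) hjm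
    have hπ'fix : ∀ x : Fin d, (Equiv.swap j (π j) * π) x ≠ x → (x : ℕ) < (j : ℕ) := by
      intro x hx
      by_contra hxx
      push_neg at hxx
      apply hx
      by_cases hxj : x = j
      · subst hxj
        rw [Equiv.Perm.mul_apply, Equiv.swap_apply_right]
      · have hjx : j < x := by
          rw [Fin.lt_def]
          exact lt_of_le_of_ne hxx (fun h => hxj (Fin.val_injective h.symm))
        have hxs : π x = x := by
          by_contra hxs
          exact absurd (hjmax x (Equiv.Perm.mem_support.mpr hxs)) (not_le.mpr hjx)
        rw [Equiv.Perm.mul_apply, hxs]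
        exact Equiv.swap_apply_of_ne_of_ne hxj (lt_trans hij hjx).ne'
    obtain ⟨l₁, ⟨hl₁p, hl₁s, hl₁prod⟩, hl₁len, hl₁uniq⟩ :=
      ih (j : ℕ) hjn (Equiv.swap j (π j) * π) hπ'fix
    have hlab : ∀ p ∈ l₁, p.2 < j := by
      cases l₁ with
      | nil => simp
      | cons q rest =>
        intro p hp
        have hq2 : q.2 < j := by
          have hh := (head_spec q rest hl₁p hl₁s).1
          rw [hl₁prod] at hh
          have hmv : (Equiv.swap j (π j) * π) q.2 ≠ q.2 := by
            rw [hh]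
            exact (hl₁p q (List.mem_cons_self)).ne
          exact hπ'fix q.2 hmv
        rcases List.mem_cons.mp hp with rfl | hmem
        · exact hq2
        · have hs0 : List.Pairwise (· > ·) (q.2 :: rest.map Prod.snd) := by
            rw [List.map_cons] at hl₁s; exact hl₁s
          have hs' := List.pairwise_cons.mp hs0
          exact lt_trans (hs'.1 p.2 (List.mem_map_of_mem (f := Prod.snd) hmem)) hq2
    refine ⟨(π j, j) :: l₁, ⟨?_, ?_, ?_⟩, ?_, ?_⟩
    · rintro p hp
      rcases List.mem_cons.mp hp with rfl | hmem
      · exact hij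
      · exact hl₁p p hmem
    · simp only [List.map_cons]
      refine List.pairwise_cons.mpr ⟨?_, hl₁s⟩
      intro b hb
      obtain ⟨p, hpmem, rfl⟩ := List.mem_map.mp hb
      exact hlab p hpmem
    · simp only [List.map_cons, List.prod_cons, hl₁prod]
      show Equiv.swap (π j) j * (Equiv.swap j (π j) * π) = π
      rw [Equiv.swap_comm, ← mul_assoc, Equiv.swap_mul_self, one_mul]
    · have he := ell_swap_mul π j hjm
      have hle := ell_le (Equiv.swap j (π j) * π)
      simp only [List.length_cons, hl₁len]
      omega
    · rintro l' ⟨hp', hs', hprod'⟩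
      cases l' with
      | nil =>
        exfalso
        apply h1
        rw [← hprod']
        simp
      | cons q rest =>
        obtain ⟨hq1, hq2⟩ := head_spec q rest hp' hs'
        rw [hprod'] at hq1 hq2
        have hq2j : q.2 = j := by
          have hA : q.2 ≤ j := hjmax q.2 (Equiv.Perm.mem_support.mpr
            (by rw [hq1]; exact (hp' q (List.mem_cons_self)).ne))
          have hB : ¬ q.2 < j := fun h => hjm (hq2 j h)
          exact le_antisymm hA (not_lt.mp hB)
        have hq1j : q.1 = π j := by rw [← hq1, hq2j]
        have hqeq : toSwap q = Equiv.swap j (π j) := by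
          show Equiv.swap q.1 q.2 = _
          rw [hq1j, hq2j, Equiv.swap_comm]
        have hthis : toSwap q * (rest.map toSwap).prod = π := by
          simpa only [List.map_cons, List.prod_cons] using hprod'
        have hrestprod : (rest.map toSwap).prod = Equiv.swap j (π j) * π := by
          have h2 : (rest.map toSwap).prod = (toSwap q)⁻¹ * π := by
            rw [← hthis, inv_mul_cancel_left]
          rw [h2, hqeq, Equiv.swap_inv]
        have hrest : rest = l₁ := by
          apply hl₁uniq
          refine ⟨fun p hp => hp' p (List.mem_cons_of_mem _ hp), ?_, hrestprod⟩
          have hs0 : List.Pairwise (· > ·) (q.2 :: rest.map Prod.snd) := by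
            rw [List.map_cons] at hs'; exact hs'
          exact (List.pairwise_cons.mp hs0).2
        have hqq : q = (π j, j) := by
          rw [← hq1j, ← hq2j]
        rw [hrest, hqq]

/-- Between every pair of permutations `ρ, σ ∈ S_d` there is a unique strictly
decreasing walk in the Hurwitz–Cayley graph, i.e. a unique sequence of transpositions
`((i_1 j_1), …, (i_r j_r))` with `i_k < j_k`, `j_1 > j_2 > ⋯ > j_r` and
`ρ·(i_1 j_1)⋯(i_r j_r) = σ`; moreover its length is `d - ℓ(ρ⁻¹σ)`, so it is a geodesic. -/
theorem existsUnique_strictlyDecreasingWalk (d : ℕ) (hd : 1 ≤ d)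
    (ρ σ : Equiv.Perm (Fin d)) :
    (∃! l : List (Fin d × Fin d),
      (∀ p ∈ l, p.1 < p.2) ∧ (l.map Prod.snd).Pairwise (· > ·) ∧
        ρ * (l.map toSwap).prod = σ) ∧
    (∀ l : List (Fin d × Fin d),
      ((∀ p ∈ l, p.1 < p.2) ∧ (l.map Prod.snd).Pairwise (· > ·) ∧
        ρ * (l.map toSwap).prod = σ) →
      l.length = d - ell (ρ⁻¹ * σ)) := by
  obtain ⟨l, ⟨hp, hs, hprod⟩, hlen, huniq⟩ :=
    main_lemma d d (ρ⁻¹ * σ) (fun x _ => x.isLt)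
  have htrans : ∀ l' : List (Fin d × Fin d),
      ρ * (l'.map toSwap).prod = σ ↔ (l'.map toSwap).prod = ρ⁻¹ * σ := by
    intro l'
    constructor
    · intro h; rw [← h]; group
    · intro h; rw [h]; group
  constructor
  · refine ⟨l, ⟨hp, hs, (htrans l).mpr hprod⟩, ?_⟩
    intro l' ⟨hp', hs', hprod'⟩
    exact huniq l' ⟨hp', hs', (htrans l').mp hprod'⟩
  · intro l' ⟨hp', hs', hprod'⟩
    rw [huniq l' ⟨hp', hs', (htrans l').mp hprod'⟩]
    exact hlen
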